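/- Let H be a Hilbert space, T₁, T₂ : H → H firmly nonexpansive, C : H → H β-cocoercive with β > 0, and γ ∈ (0, 2β). Define T := I − T₂ + T₁∘(2T₂ − I − γC∘T₂) and α := 2β/(4β − γ). Then α < 1 and for all z, w ∈ H: ‖Tz − Tw‖² ≤ ‖z − w‖² − ((1−α)/α)‖(I−T)z − (I−T)w‖². In particular, T is α-averaged. -/

import Mathlib

open scoped InnerProductSpace

set_option maxHeartbeats 1000000 in
/-- Averagedness of `T = I - T₂ + T₁∘(2T₂ - I - γC∘T₂)` with `T₁, T₂` firmly
nonexpansive and `C` β-cocoercive, with averaging coefficient `α = 2β/(4β-γ) < 1`. -/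
theorem three_operator_averaged
    {H : Type*} [NormedAddCommGroup H] [InnerProductSpace ℝ H] [CompleteSpace H]
    (T₁ T₂ : H → H) (C : H → H) (β γ : ℝ)
    (hβ : 0 < β) (hγ : γ ∈ Set.Ioo 0 (2 * β))
    (hT₁ : ∀ x y, ‖T₁ x - T₁ y‖ ^ 2 ≤ ⟪T₁ x - T₁ y, x - y⟫_ℝ)
    (hT₂ : ∀ x y, ‖T₂ x - T₂ y‖ ^ 2 ≤ ⟪T₂ x - T₂ y, x - y⟫_ℝ)
    (hC : ∀ x y, β * ‖C x - C y‖ ^ 2 ≤ ⟪C x - C y, x - y⟫_ℝ)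
    (T : H → H)
    (hT : ∀ z, T z = z - T₂ z + T₁ ((2 : ℝ) • T₂ z - z - γ • C (T₂ z)))
    (α : ℝ) (hα : α = 2 * β / (4 * β - γ)) :
    α < 1 ∧
    (∀ z w : H, ‖T z - T w‖ ^ 2 ≤
      ‖z - w‖ ^ 2 - ((1 - α) / α) * ‖(z - T z) - (w - T w)‖ ^ 2) ∧
    ∃ R : H → H, (∀ x y, ‖R x - R y‖ ≤ ‖x - y‖) ∧
      ∀ z, T z = (1 - α) • z + α • R z := by
  obtain ⟨hγ0, hγ2β⟩ := hγ
  have hden : 0 < 4 * β - γ := by linarith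
  have hα1 : α < 1 := by rw [hα, div_lt_one hden]; linarith
  have hα0 : 0 < α := by rw [hα]; positivity
  have hαne : α ≠ 0 := ne_of_gt hα0
  have hratio : (1 - α) / α = (2 * β - γ) / (2 * β) := by
    rw [hα, div_eq_div_iff (by positivity) (by positivity), one_sub_div hden.ne']
    ring
  have key : ∀ z w : H, ‖T z - T w‖ ^ 2 ≤
      ‖z - w‖ ^ 2 - ((1 - α) / α) * ‖(z - T z) - (w - T w)‖ ^ 2 := by
    intro z w
    set e := z - w with he
    set d2 := T₂ z - T₂ w with hd2
    set dC := C (T₂ z) - C (T₂ w) with hdC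
    set u := (2 : ℝ) • T₂ z - z - γ • C (T₂ z) with hu
    set v := (2 : ℝ) • T₂ w - w - γ • C (T₂ w) with hv
    set d1 := T₁ u - T₁ v with hd1
    have hTzw : T z - T w = e + (d1 - d2) := by
      rw [hT z, hT w]; rw [he, hd1, hd2]; abel
    have hITzw : (z - T z) - (w - T w) = d2 - d1 := by
      rw [hT z, hT w]; rw [hd1, hd2]; abel
    have huv : u - v = (2 : ℝ) • d2 - e - γ • dC := by
      rw [hu, hv, hd2, he, hdC]
      module
    have h1 := hT₁ u v
    have h2 := hT₂ z w
    have h3 := hC (T₂ z) (T₂ w)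
    rw [huv] at h1
    rw [← hd1] at h1
    rw [← hd2, ← he] at h2
    rw [← hdC, ← hd2] at h3
    have h1' : ‖d1‖ ^ 2 ≤ 2 * ⟪d1, d2⟫_ℝ - ⟪d1, e⟫_ℝ - γ * ⟪d1, dC⟫_ℝ := by
      have : ⟪d1, (2 : ℝ) • d2 - e - γ • dC⟫_ℝ
          = 2 * ⟪d1, d2⟫_ℝ - ⟪d1, e⟫_ℝ - γ * ⟪d1, dC⟫_ℝ := by
        simp [inner_sub_right, real_inner_smul_right]
      linarith [h1, this.le, this.ge]
    have hsq : (0 : ℝ) ≤ ‖(d2 - d1) - (2 * β) • dC‖ ^ 2 := sq_nonneg _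
    have hsq' : ‖(d2 - d1) - (2 * β) • dC‖ ^ 2
        = ‖d2‖ ^ 2 + ‖d1‖ ^ 2 - 2 * ⟪d1, d2⟫_ℝ
          - 4 * β * ⟪d2, dC⟫_ℝ + 4 * β * ⟪d1, dC⟫_ℝ + 4 * β ^ 2 * ‖dC‖ ^ 2 := by
      rw [← real_inner_self_eq_norm_sq, ← real_inner_self_eq_norm_sq,
        ← real_inner_self_eq_norm_sq, ← real_inner_self_eq_norm_sq]
      simp only [inner_sub_left, inner_sub_right, real_inner_smul_left,
        real_inner_smul_right]
      rw [real_inner_comm d2 d1, real_inner_comm dC d2, real_inner_comm dC d1]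
      ring
    have hL : ‖T z - T w‖ ^ 2 = ‖e‖ ^ 2 + 2 * ⟪d1, e⟫_ℝ - 2 * ⟪d2, e⟫_ℝ
        + ‖d1‖ ^ 2 + ‖d2‖ ^ 2 - 2 * ⟪d1, d2⟫_ℝ := by
      rw [hTzw, ← real_inner_self_eq_norm_sq, ← real_inner_self_eq_norm_sq,
        ← real_inner_self_eq_norm_sq, ← real_inner_self_eq_norm_sq]
      simp only [inner_add_left, inner_add_right, inner_sub_left, inner_sub_right]
      rw [real_inner_comm e d1, real_inner_comm e d2, real_inner_comm d2 d1]
      ring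
    have hR : ‖(z - T z) - (w - T w)‖ ^ 2 = ‖d1‖ ^ 2 + ‖d2‖ ^ 2 - 2 * ⟪d1, d2⟫_ℝ := by
      rw [hITzw, ← real_inner_self_eq_norm_sq, ← real_inner_self_eq_norm_sq,
        ← real_inner_self_eq_norm_sq]
      simp only [inner_sub_left, inner_sub_right]
      rw [real_inner_comm d2 d1]
      ring
    rw [hL, hR, hratio]
    have h2β : (0:ℝ) < 2 * β := by linarith
    have key2 : (2 * β - γ) / (2 * β) * (‖d1‖ ^ 2 + ‖d2‖ ^ 2 - 2 * ⟪d1, d2⟫_ℝ)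
        ≤ ‖e‖ ^ 2 - (‖e‖ ^ 2 + 2 * ⟪d1, e⟫_ℝ - 2 * ⟪d2, e⟫_ℝ
          + ‖d1‖ ^ 2 + ‖d2‖ ^ 2 - 2 * ⟪d1, d2⟫_ℝ) := by
      rw [div_mul_eq_mul_div, div_le_iff₀ h2β]
      have hA : 0 ≤ (‖d1‖ ^ 2 + ‖d2‖ ^ 2 - 2 * ⟪d1, d2⟫_ℝ) + 4 * β * ⟪d1, dC⟫_ℝ := by
        nlinarith [hsq, hsq', real_inner_comm dC d2,
          mul_le_mul_of_nonneg_left h3 (by linarith : (0:ℝ) ≤ 4 * β)]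
      have hB : (‖d1‖ ^ 2 + ‖d2‖ ^ 2 - 2 * ⟪d1, d2⟫_ℝ) + γ * ⟪d1, dC⟫_ℝ
          ≤ ⟪d2, e⟫_ℝ - ⟪d1, e⟫_ℝ := by linarith [h1', h2]
      nlinarith [mul_nonneg hγ0.le hA,
        mul_le_mul_of_nonneg_left hB (by linarith : (0:ℝ) ≤ 4 * β)]
    linarith [key2]
  refine ⟨hα1, key, ⟨fun z => α⁻¹ • (T z - (1 - α) • z), ?_, ?_⟩⟩
  · intro x y
    have hk := key x y
    have hd : (α⁻¹ • (T x - (1 - α) • x)) - (α⁻¹ • (T y - (1 - α) • y))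
        = α⁻¹ • ((T x - T y) - (1 - α) • (x - y)) := by
      module
    have hexp : ‖(T x - T y) - (1 - α) • (x - y)‖ ^ 2
        = ‖T x - T y‖ ^ 2 - 2 * (1 - α) * ⟪T x - T y, x - y⟫_ℝ
          + (1 - α) ^ 2 * ‖x - y‖ ^ 2 := by
      rw [norm_sub_sq_real, real_inner_smul_right, norm_smul,
        Real.norm_eq_abs, mul_pow, sq_abs]
      ring
    have hIT : ‖(x - T x) - (y - T y)‖ ^ 2
        = ‖x - y‖ ^ 2 - 2 * ⟪T x - T y, x - y⟫_ℝ + ‖T x - T y‖ ^ 2 := by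
      have : (x - T x) - (y - T y) = (x - y) - (T x - T y) := by abel
      rw [this, norm_sub_sq_real, real_inner_comm]
    rw [hIT] at hk
    have hkey2 : ‖(T x - T y) - (1 - α) • (x - y)‖ ^ 2 ≤ α ^ 2 * ‖x - y‖ ^ 2 := by
      rw [hexp]
      have h1 : α * ‖T x - T y‖ ^ 2 ≤ α * (‖x - y‖ ^ 2 - (1 - α) / α *
          (‖x - y‖ ^ 2 - 2 * ⟪T x - T y, x - y⟫_ℝ + ‖T x - T y‖ ^ 2)) :=
        mul_le_mul_of_nonneg_left hk (le_of_lt hα0)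
      have h2 : α * ((1 - α) / α * (‖x - y‖ ^ 2 - 2 * ⟪T x - T y, x - y⟫_ℝ
          + ‖T x - T y‖ ^ 2)) = (1 - α) * (‖x - y‖ ^ 2
          - 2 * ⟪T x - T y, x - y⟫_ℝ + ‖T x - T y‖ ^ 2) := by
        field_simp
      nlinarith [h1, h2]
    have hnorm : ‖α⁻¹ • ((T x - T y) - (1 - α) • (x - y))‖
        = α⁻¹ * ‖(T x - T y) - (1 - α) • (x - y)‖ := by
      rw [norm_smul, Real.norm_eq_abs, abs_of_pos (inv_pos.mpr hα0)]
    rw [hd, hnorm]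
    rw [inv_mul_le_iff₀ hα0]
    have := le_of_pow_le_pow_left₀ (n := 2) (by norm_num)
      (by positivity : (0:ℝ) ≤ α * ‖x - y‖) (by nlinarith [hkey2] : ‖(T x - T y) - (1 - α) • (x - y)‖ ^ 2 ≤ (α * ‖x - y‖) ^ 2)
    linarith [this]
  · intro z
    rw [smul_smul, mul_inv_cancel₀ hαne, one_smul]
    abel
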